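/- Setting θ = π/14, d₁ = sin(3θ)/sin θ, d₂ = sin(5θ)/sin θ, and d₃ = 1/(2 sin θ), the identity d₂² − 2·d₁·d₃ − d₁² + d₂ = 0 holds. -/

import Mathlib

/-- With `θ = π/14`, `d₁ = sin(3θ)/sin θ`, `d₂ = sin(5θ)/sin θ`, `d₃ = 1/(2 sin θ)`,
one has `d₂² − 2d₁d₃ − d₁² + d₂ = 0`. -/
theorem stmt_10 (θ d₁ d₂ d₃ : ℝ)
    (hθ : θ = Real.pi / 14)
    (hd₁ : d₁ = Real.sin (3 * θ) / Real.sin θ)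
    (hd₂ : d₂ = Real.sin (5 * θ) / Real.sin θ)
    (hd₃ : d₃ = 1 / (2 * Real.sin θ)) :
    d₂ ^ 2 - 2 * d₁ * d₃ - d₁ ^ 2 + d₂ = 0 := by
  subst hd₁ hd₂ hd₃
  set s := Real.sin θ with hsdef
  have hθpos : 0 < θ := by rw [hθ]; positivity
  have hθlt : θ < Real.pi := by
    rw [hθ]; nlinarith [Real.pi_pos]
  have hs : s ≠ 0 := ne_of_gt (Real.sin_pos_of_pos_of_lt_pi hθpos hθlt)
  have hc : Real.cos θ ^ 2 = 1 - s ^ 2 := Real.cos_sq' θ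
  have e3 : Real.sin (3 * θ) = 3 * s - 4 * s ^ 3 := Real.sin_three_mul θ
  have e5 : Real.sin (5 * θ) = 16 * s ^ 5 - 20 * s ^ 3 + 5 * s := by
    rw [show (5 : ℝ) * θ = 2 * θ + 3 * θ by ring, Real.sin_add, Real.sin_two_mul,
      Real.cos_two_mul, Real.sin_three_mul, Real.cos_three_mul]
    linear_combination (8 * s * Real.cos θ ^ 2 + 8 * s - 16 * s ^ 3) * hc
  have c5 : Real.cos (5 * θ) = Real.cos θ * (1 - 12 * s ^ 2 + 16 * s ^ 4) := by
    rw [show (5 : ℝ) * θ = 2 * θ + 3 * θ by ring, Real.cos_add, Real.sin_two_mul,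
      Real.cos_two_mul, Real.sin_three_mul, Real.cos_three_mul]
    linear_combination (Real.cos θ * (8 * Real.cos θ ^ 2 - 2 - 8 * s ^ 2)) * hc
  have e7 : Real.sin (7 * θ) = 7 * s - 56 * s ^ 3 + 112 * s ^ 5 - 64 * s ^ 7 := by
    rw [show (7 : ℝ) * θ = 2 * θ + 5 * θ by ring, Real.sin_add, Real.sin_two_mul,
      Real.cos_two_mul, e5, c5]
    linear_combination (12 * s - 64 * s ^ 3 + 64 * s ^ 5) * hc
  have hval : Real.sin (7 * θ) = 1 := by
    rw [hθ, show (7 : ℝ) * (Real.pi / 14) = Real.pi / 2 by ring, Real.sin_pi_div_two]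
  have h7 : 64 * s ^ 7 - 112 * s ^ 5 + 56 * s ^ 3 - 7 * s + 1 = 0 := by
    linear_combination e7 - hval
  rw [e3, e5]
  field_simp
  linear_combination (4*s^2 - 3) * h7
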